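/- Let E be a directed graph on a vertex type V and let v, w be vertices such that there is a path from w to v under E. Then for every vertex x, x is strongly connected to v under E + (v,w) if and only if there is a path from w to x under E and a path from x to v under E. In particular, v and w are strongly connected under E + (v,w), and the vertex set of the new strong component created by adding the arc (v,w) is Z = {x | there is a path from w to x and a path from x to v under E}. -/

import Mathlib

private lemma addArc_path_decompose {V : Type*} (E : V → V → Prop) (v w : V)
    {a b : V}
    (h : Relation.ReflTransGen (fun a b => E a b ∨ (a = v ∧ b = w)) a b) :
    Relation.ReflTransGen E a b ∨
      (Relation.ReflTransGen E a v ∧ Relation.ReflTransGen E w b) := by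
  induction h with
  | refl => exact Or.inl Relation.ReflTransGen.refl
  | tail _ hstep ih =>
    rcases hstep with hE | ⟨hc, hb⟩
    · rcases ih with h1 | ⟨h1, h2⟩
      · exact Or.inl (h1.tail hE)
      · exact Or.inr ⟨h1, h2.tail hE⟩
    · subst hc hb
      rcases ih with h1 | ⟨h1, _⟩
      · exact Or.inr ⟨h1, Relation.ReflTransGen.refl⟩
      · exact Or.inr ⟨h1, Relation.ReflTransGen.refl⟩

private lemma addArc_lift {V : Type*} (E : V → V → Prop) (v w : V) {a b : V}
    (h : Relation.ReflTransGen E a b) :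
    Relation.ReflTransGen (fun a b => E a b ∨ (a = v ∧ b = w)) a b :=
  Relation.ReflTransGen.mono (fun _ _ h => Or.inl h) _ _ h

/-- If there is a path from `w` to `v` in `E`, then after adding the arc
`(v,w)` a vertex `x` is strongly connected to `v` iff `w` reaches `x` and
`x` reaches `v` in `E`; in particular `v` and `w` become strongly connected,
so the vertex set of the new strong component is
`Z = {x | w ⟶* x and x ⟶* v under E}`. -/
theorem new_strong_component_of_addArc
    {V : Type*} (E : V → V → Prop) (v w : V)
    (hpath : Relation.ReflTransGen E w v) :
    (∀ x : V,
      (Relation.ReflTransGen (fun a b => E a b ∨ (a = v ∧ b = w)) x v ∧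
       Relation.ReflTransGen (fun a b => E a b ∨ (a = v ∧ b = w)) v x) ↔
      (Relation.ReflTransGen E w x ∧ Relation.ReflTransGen E x v)) ∧
    (Relation.ReflTransGen (fun a b => E a b ∨ (a = v ∧ b = w)) v w ∧
     Relation.ReflTransGen (fun a b => E a b ∨ (a = v ∧ b = w)) w v) := by
  have hvw : Relation.ReflTransGen (fun a b => E a b ∨ (a = v ∧ b = w)) v w :=
    Relation.ReflTransGen.single (Or.inr ⟨rfl, rfl⟩)
  refine ⟨fun x => ⟨fun ⟨hxv, hvx⟩ => ?_, fun ⟨hwx, hxv⟩ => ?_⟩,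
    hvw, addArc_lift E v w hpath⟩
  · constructor
    · rcases addArc_path_decompose E v w hvx with h | ⟨_, h⟩
      · exact hpath.trans h
      · exact h
    · rcases addArc_path_decompose E v w hxv with h | ⟨h, _⟩
      · exact h
      · exact h
  · exact ⟨addArc_lift E v w hxv, hvw.trans (addArc_lift E v w hwx)⟩
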